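/- If t is even and C ⊆ {0,1}^n is an orthogonal array OA(N,n,2,t), then B = {c|0 : c ∈ C} ∪ {(c+1̄)|1 : c ∈ C} ⊆ {0,1}^{n+1} (where c|b denotes appending the bit b and c+1̄ denotes the complement of all coordinates) is an orthogonal array OA(2N, n+1, 2, t+1). -/

import Mathlib

private lemma fin2_or (a b : Fin 2) : a = b ∨ a = b + 1 := by
  revert a b; decide

private lemma fin2_ne_add_one (a : Fin 2) : a ≠ a + 1 := by
  revert a; decide

private lemma fin2_add_one_eq (a b : Fin 2) : a + 1 = b ↔ a = b + 1 := by
  revert a b; decide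

private lemma fin2_zero_or_one (a : Fin 2) : a = 0 ∨ a = 1 := by
  revert a; decide

private def Acnt {n : ℕ} (C : Finset (Fin n → Fin 2)) (s : Finset (Fin n))
    (g : Fin n → Fin 2) : ℕ :=
  (C.filter (fun x => ∀ i ∈ s, x i = g i)).card

private lemma flip_step {n t N : ℕ} (C : Finset (Fin n → Fin 2))
    (hOA : ∀ s : Finset (Fin n), s.card = t → ∀ g : Fin n → Fin 2,
      (C.filter (fun x => ∀ i ∈ s, x i = g i)).card * 2 ^ t = N)
    (s : Finset (Fin n)) (hs : s.card = t + 1) (i : Fin n) (hi : i ∈ s)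
    (g : Fin n → Fin 2) :
    (Acnt C s g + Acnt C s (Function.update g i (g i + 1))) * 2 ^ t = N := by
  classical
  have hsplit : Acnt C (s.erase i) g
      = Acnt C s g + Acnt C s (Function.update g i (g i + 1)) := by
    unfold Acnt
    rw [← Finset.card_union_of_disjoint]
    · congr 1
      ext x
      simp only [Finset.mem_union, Finset.mem_filter]
      constructor
      · rintro ⟨hx, h⟩
        rcases fin2_or (x i) (g i) with h1 | h1
        · left
          refine ⟨hx, fun j hj => ?_⟩
          rcases eq_or_ne j i with rfl | hne
          · exact h1
          · exact h j (Finset.mem_erase.2 ⟨hne, hj⟩)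
        · right
          refine ⟨hx, fun j hj => ?_⟩
          rcases eq_or_ne j i with rfl | hne
          · simpa [Function.update_self] using h1
          · rw [Function.update_of_ne hne]
            exact h j (Finset.mem_erase.2 ⟨hne, hj⟩)
      · rintro (⟨hx, h⟩ | ⟨hx, h⟩)
        · exact ⟨hx, fun j hj => h j (Finset.mem_of_mem_erase hj)⟩
        · refine ⟨hx, fun j hj => ?_⟩
          have hne : j ≠ i := (Finset.mem_erase.1 hj).1
          have := h j (Finset.mem_of_mem_erase hj)
          rwa [Function.update_of_ne hne] at this
    · rw [Finset.disjoint_left]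
      rintro x hx1 hx2
      have e1 := (Finset.mem_filter.1 hx1).2 i hi
      have e2 := (Finset.mem_filter.1 hx2).2 i hi
      rw [Function.update_self] at e2
      rw [e1] at e2
      exact fin2_ne_add_one _ e2
  have hcard : (s.erase i).card = t := by
    rw [Finset.card_erase_of_mem hi, hs]
    omega
  rw [← hsplit]
  exact hOA _ hcard g

private lemma parity_lem {n t N : ℕ} (C : Finset (Fin n → Fin 2))
    (hOA : ∀ s : Finset (Fin n), s.card = t → ∀ g : Fin n → Fin 2,
      (C.filter (fun x => ∀ i ∈ s, x i = g i)).card * 2 ^ t = N)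
    (u : Finset (Fin n)) :
    ∀ s : Finset (Fin n), u ⊆ s → s.card = t + 1 → ∀ g : Fin n → Fin 2,
      (Even u.card → Acnt C s (fun i => if i ∈ u then g i + 1 else g i) = Acnt C s g) ∧
      (Odd u.card →
        (Acnt C s g + Acnt C s (fun i => if i ∈ u then g i + 1 else g i)) * 2 ^ t = N) := by
  classical
  induction u using Finset.induction_on with
  | empty =>
    intro s _ _ g
    constructor
    · intro _
      simp [Acnt]
    · intro h
      simp at h
  | @insert a u ha ih =>
    intro s hsub hcard g
    have has : a ∈ s := hsub (Finset.mem_insert_self a u)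
    have husub : u ⊆ s := fun x hx => hsub (Finset.mem_insert_of_mem hx)
    have hfun : (fun i => if i ∈ insert a u then g i + 1 else g i)
        = Function.update (fun i => if i ∈ u then g i + 1 else g i) a
            ((fun i => if i ∈ u then g i + 1 else g i) a + 1) := by
      funext i
      rcases eq_or_ne i a with rfl | hne
      · simp [Function.update_self, ha, Finset.mem_insert]
      · simp [Function.update_of_ne hne, Finset.mem_insert, hne]
    have hstep := flip_step C hOA s hcard a has (fun i => if i ∈ u then g i + 1 else g i)
    rw [← hfun] at hstep
    obtain ⟨ihe, iho⟩ := ih s husub hcard g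
    have hp : 0 < 2 ^ t := pow_pos (by norm_num) t
    rcases Nat.even_or_odd u.card with hpar | hpar
    · constructor
      · intro hev
        rw [Finset.card_insert_of_notMem ha] at hev
        obtain ⟨k1, hk1⟩ := hpar
        obtain ⟨k2, hk2⟩ := hev
        omega
      · intro _
        rw [ihe hpar] at hstep
        exact hstep
    · constructor
      · intro _
        have h1 := iho hpar
        have h2 : Acnt C s g + Acnt C s (fun i => if i ∈ u then g i + 1 else g i)
            = Acnt C s (fun i => if i ∈ u then g i + 1 else g i)
              + Acnt C s (fun i => if i ∈ insert a u then g i + 1 else g i) :=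
          Nat.eq_of_mul_eq_mul_right hp (h1.trans hstep.symm)
        omega
      · intro hodd
        rw [Finset.card_insert_of_notMem ha] at hodd
        obtain ⟨k1, hk1⟩ := hpar
        obtain ⟨k2, hk2⟩ := hodd
        omega

private lemma parity_compl {n t N : ℕ} (C : Finset (Fin n → Fin 2))
    (hOA : ∀ s : Finset (Fin n), s.card = t → ∀ g : Fin n → Fin 2,
      (C.filter (fun x => ∀ i ∈ s, x i = g i)).card * 2 ^ t = N)
    (ht : Even t) (s : Finset (Fin n)) (hs : s.card = t + 1) (g : Fin n → Fin 2) :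
    (Acnt C s g + Acnt C s (fun i => g i + 1)) * 2 ^ t = N := by
  classical
  obtain ⟨_, ho⟩ := parity_lem C hOA s s (Finset.Subset.refl s) hs g
  have hodd : Odd s.card := by rw [hs]; exact ht.add_one
  have h1 := ho hodd
  have hcongr : Acnt C s (fun i => if i ∈ s then g i + 1 else g i)
      = Acnt C s (fun i => g i + 1) := by
    unfold Acnt
    congr 1
    apply Finset.filter_congr
    intro x _
    constructor
    · intro h i hi
      simpa [hi] using h i hi
    · intro h i hi
      simpa [hi] using h i hi
  rwa [hcongr] at h1

/-- If t is even and C is an OA(N,n,2,t), then B = C|0 ∪ (C+1̄)|1 is an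
OA(2N, n+1, 2, t+1). -/
theorem stmt_4 (n t N : ℕ) (ht : Even t) (C : Finset (Fin n → Fin 2))
    (hcard : C.card = N)
    (hOA : ∀ s : Finset (Fin n), s.card = t → ∀ g : Fin n → Fin 2,
      (C.filter (fun x => ∀ i ∈ s, x i = g i)).card * 2 ^ t = N) :
    let B : Finset (Fin (n + 1) → Fin 2) :=
      C.image (fun c => Fin.snoc c 0) ∪ C.image (fun c => Fin.snoc (fun i => c i + 1) 1);
    B.card = 2 * N ∧
    ∀ s : Finset (Fin (n + 1)), s.card = t + 1 → ∀ g : Fin (n + 1) → Fin 2,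
      (B.filter (fun x => ∀ i ∈ s, x i = g i)).card * 2 ^ (t + 1) = 2 * N := by
  classical
  intro B
  have hsnoc_inj : ∀ b : Fin 2, Function.Injective (fun c : Fin n → Fin 2 => (Fin.snoc c b : Fin (n+1) → Fin 2)) := by
    intro b x y h
    funext j
    have := congrFun h (Fin.castSucc j)
    simpa [Fin.snoc_castSucc] using this
  have hsnoc1_inj : Function.Injective
      (fun c : Fin n → Fin 2 => (Fin.snoc (fun i => c i + 1) 1 : Fin (n+1) → Fin 2)) := by
    intro x y h
    have h2 := hsnoc_inj 1 h
    funext i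
    have := congrFun h2 i
    exact add_right_cancel this
  have hdisj : Disjoint (C.image (fun c => (Fin.snoc c 0 : Fin (n+1) → Fin 2)))
      (C.image (fun c => (Fin.snoc (fun i => c i + 1) 1 : Fin (n+1) → Fin 2))) := by
    rw [Finset.disjoint_left]
    rintro x hx hy
    simp only [Finset.mem_image] at hx hy
    obtain ⟨c, _, rfl⟩ := hx
    obtain ⟨d, _, hd⟩ := hy
    have := congrFun hd (Fin.last n)
    simp [Fin.snoc_last] at this
  constructor
  · show (C.image _ ∪ C.image _).card = 2 * N
    rw [Finset.card_union_of_disjoint hdisj,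
      Finset.card_image_of_injective _ (hsnoc_inj 0),
      Finset.card_image_of_injective _ hsnoc1_inj, hcard]
    omega
  · intro s hs g
    set s' : Finset (Fin n) := Finset.univ.filter (fun j => Fin.castSucc j ∈ s) with hs'def
    have hmem' : ∀ j : Fin n, j ∈ s' ↔ Fin.castSucc j ∈ s := by
      intro j; simp [hs'def]
    have himg : s'.image Fin.castSucc = s.erase (Fin.last n) := by
      ext i
      simp only [Finset.mem_image, Finset.mem_erase]
      constructor
      · rintro ⟨j, hj, rfl⟩
        exact ⟨(Fin.castSucc_lt_last j).ne, (hmem' j).1 hj⟩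
      · rintro ⟨hne, hi⟩
        obtain ⟨j, rfl⟩ := Fin.exists_castSucc_eq.2 hne
        exact ⟨j, (hmem' j).2 hi, rfl⟩
    have hcards' : s'.card = (s.erase (Fin.last n)).card := by
      rw [← himg, Finset.card_image_of_injective _ (Fin.castSucc_injective n)]
    have hcond : ∀ (x : Fin n → Fin 2) (b : Fin 2),
        (∀ i ∈ s, (Fin.snoc x b : Fin (n+1) → Fin 2) i = g i) ↔
        ((Fin.last n ∈ s → b = g (Fin.last n)) ∧ ∀ j ∈ s', x j = g (Fin.castSucc j)) := by
      intro x b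
      constructor
      · intro h
        refine ⟨fun hl => by simpa [Fin.snoc_last] using h _ hl, fun j hj => ?_⟩
        have := h _ ((hmem' j).1 hj)
        simpa [Fin.snoc_castSucc] using this
      · rintro ⟨h1, h2⟩ i hi
        induction i using Fin.lastCases with
        | last => simpa [Fin.snoc_last] using h1 hi
        | cast j =>
          have := h2 j ((hmem' j).2 hi)
          simpa [Fin.snoc_castSucc] using this
    have hsplit : (B.filter (fun x => ∀ i ∈ s, x i = g i)).card
        = ((C.image (fun c => (Fin.snoc c 0 : Fin (n+1) → Fin 2))).filter
            (fun x => ∀ i ∈ s, x i = g i)).card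
        + ((C.image (fun c => (Fin.snoc (fun i => c i + 1) 1 : Fin (n+1) → Fin 2))).filter
            (fun x => ∀ i ∈ s, x i = g i)).card := by
      show (((C.image _) ∪ (C.image _)).filter _).card = _
      rw [Finset.filter_union, Finset.card_union_of_disjoint
        (hdisj.mono (Finset.filter_subset _ _) (Finset.filter_subset _ _))]
    have hX : ((C.image (fun c => (Fin.snoc c 0 : Fin (n+1) → Fin 2))).filter
          (fun x => ∀ i ∈ s, x i = g i)).card
        = (C.filter (fun c => (Fin.last n ∈ s → (0 : Fin 2) = g (Fin.last n)) ∧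
            ∀ j ∈ s', c j = g (Fin.castSucc j))).card := by
      rw [Finset.filter_image, Finset.card_image_of_injective _ (hsnoc_inj 0)]
      congr 1
      apply Finset.filter_congr
      intro c _
      exact hcond c 0
    have hY : ((C.image (fun c => (Fin.snoc (fun i => c i + 1) 1 : Fin (n+1) → Fin 2))).filter
          (fun x => ∀ i ∈ s, x i = g i)).card
        = (C.filter (fun c => (Fin.last n ∈ s → (1 : Fin 2) = g (Fin.last n)) ∧
            ∀ j ∈ s', c j = g (Fin.castSucc j) + 1)).card := by
      rw [Finset.filter_image, Finset.card_image_of_injective _ hsnoc1_inj]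
      congr 1
      apply Finset.filter_congr
      intro c _
      rw [hcond (fun i => c i + 1) 1]
      constructor
      · rintro ⟨h1, h2⟩
        exact ⟨h1, fun j hj => (fin2_add_one_eq _ _).1 (h2 j hj)⟩
      · rintro ⟨h1, h2⟩
        exact ⟨h1, fun j hj => (fin2_add_one_eq _ _).2 (h2 j hj)⟩
    rw [hsplit, hX, hY]
    by_cases hlast : Fin.last n ∈ s
    · have hcardt : s'.card = t := by
        rw [hcards', Finset.card_erase_of_mem hlast, hs]
        exact Nat.add_sub_cancel t 1
      rcases fin2_zero_or_one (g (Fin.last n)) with h0 | h0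
      · have hXe : (C.filter (fun c => (Fin.last n ∈ s → (0 : Fin 2) = g (Fin.last n)) ∧
              ∀ j ∈ s', c j = g (Fin.castSucc j)))
            = C.filter (fun c => ∀ j ∈ s', c j = g (Fin.castSucc j)) := by
          apply Finset.filter_congr
          intro c _
          simp [h0]
        have hYe : (C.filter (fun c => (Fin.last n ∈ s → (1 : Fin 2) = g (Fin.last n)) ∧
              ∀ j ∈ s', c j = g (Fin.castSucc j) + 1)) = ∅ := by
          rw [Finset.filter_eq_empty_iff]
          rintro c _ ⟨h1, _⟩
          have := h1 hlast
          rw [h0] at this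
          exact absurd this (by decide)
        rw [hXe, hYe]
        have h2 := hOA s' hcardt (fun j => g (Fin.castSucc j))
        beta_reduce at h2
        simp only [Finset.card_empty, Nat.add_zero, pow_succ]
        rw [← mul_assoc, h2]
        exact Nat.mul_comm N 2
      · have hXe : (C.filter (fun c => (Fin.last n ∈ s → (0 : Fin 2) = g (Fin.last n)) ∧
              ∀ j ∈ s', c j = g (Fin.castSucc j))) = ∅ := by
          rw [Finset.filter_eq_empty_iff]
          rintro c _ ⟨h1, _⟩
          have := h1 hlast
          rw [h0] at this
          exact absurd this (by decide)
        have hYe : (C.filter (fun c => (Fin.last n ∈ s → (1 : Fin 2) = g (Fin.last n)) ∧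
              ∀ j ∈ s', c j = g (Fin.castSucc j) + 1))
            = C.filter (fun c => ∀ j ∈ s', c j = g (Fin.castSucc j) + 1) := by
          apply Finset.filter_congr
          intro c _
          simp [h0]
        rw [hXe, hYe]
        have h2 := hOA s' hcardt (fun j => g (Fin.castSucc j) + 1)
        beta_reduce at h2
        simp only [Finset.card_empty, Nat.zero_add, pow_succ]
        rw [← mul_assoc, h2]
        exact Nat.mul_comm N 2
    · have hcardt : s'.card = t + 1 := by
        rw [hcards', Finset.erase_eq_of_notMem hlast, hs]
      have hXe : (C.filter (fun c => (Fin.last n ∈ s → (0 : Fin 2) = g (Fin.last n)) ∧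
            ∀ j ∈ s', c j = g (Fin.castSucc j)))
          = C.filter (fun c => ∀ j ∈ s', c j = g (Fin.castSucc j)) := by
        apply Finset.filter_congr
        intro c _
        simp [hlast]
      have hYe : (C.filter (fun c => (Fin.last n ∈ s → (1 : Fin 2) = g (Fin.last n)) ∧
            ∀ j ∈ s', c j = g (Fin.castSucc j) + 1))
          = C.filter (fun c => ∀ j ∈ s', c j = g (Fin.castSucc j) + 1) := by
        apply Finset.filter_congr
        intro c _
        simp [hlast]
      rw [hXe, hYe]
      have hpar := parity_compl C hOA ht s' hcardt (fun j => g (Fin.castSucc j))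
      unfold Acnt at hpar
      beta_reduce at hpar
      rw [pow_succ, ← mul_assoc, hpar]
      exact Nat.mul_comm N 2
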